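/- arXiv:math/0703109 — 2 statements merged into one kernel-verified Lean document; each statement's English description precedes it below -/
import Mathlib

section
/- Let g ∈ ℤ[t] be a nonzero polynomial and let g*(t) = t^{deg g} g(1/t) denote its reciprocal polynomial. If δ ∈ ℤ[t] is irreducible, primitive, and symmetric (δ* = ± t^k δ for appropriate normalization, i.e., δ equals its own reciprocal up to sign), then the multiplicity of δ in the product g(t) · g*(t) is even. -/
open Polynomial

private lemma rev_pow (p : ℤ[X]) (k : ℕ) : (p ^ k).reverse = p.reverse ^ k := by
  induction k with
  | zero => rw [pow_zero, pow_zero, ← Polynomial.C_1, Polynomial.reverse_C]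
  | succ n ih => rw [pow_succ, Polynomial.reverse_mul_of_domain, ih, pow_succ]

private lemma rev_rev (p : ℤ[X]) (hp : p.coeff 0 ≠ 0) : p.reverse.reverse = p := by
  have hnd : p.reverse.natDegree = p.natDegree := by
    rw [Polynomial.reverse_natDegree]
    have : p.natTrailingDegree = 0 := by
      rw [Polynomial.natTrailingDegree_eq_zero]; exact Or.inr hp
    omega
  ext i
  rw [Polynomial.reverse, Polynomial.coeff_reflect, hnd, Polynomial.reverse,
    Polynomial.coeff_reflect, Polynomial.revAt_invol]

theorem stmt_13 (g δ : ℤ[X]) (hg : g ≠ 0) (hirr : Irreducible δ)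
    (hprim : δ.IsPrimitive) (hsym : δ.reverse = δ ∨ δ.reverse = -δ) :
    ∃ k : ℕ, Even k ∧ δ ^ k ∣ g * g.reverse ∧ ¬ δ ^ (k + 1) ∣ g * g.reverse := by
  have hprime : Prime δ := hirr.prime
  have hδ0 : δ ≠ 0 := hprime.ne_zero
  -- δ is not (an associate of) X, so δ has nonzero constant coefficient
  have hδc : δ.coeff 0 ≠ 0 := by
    intro h
    have hXd : X ∣ δ := Polynomial.X_dvd_iff.mpr h
    have hXr : X ∣ δ.reverse := by
      rcases hsym with h' | h'
      · rwa [h']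
      · rw [h']; exact hXd.neg_right
    have := Polynomial.X_dvd_iff.mp hXr
    rw [Polynomial.coeff_zero_reverse] at this
    exact Polynomial.leadingCoeff_ne_zero.mpr hδ0 this
  -- strip powers of X from g
  obtain ⟨m, h0, hXh0, rfl⟩ := WfDvdMonoid.max_power_factor hg Polynomial.irreducible_X
  have hh0 : h0 ≠ 0 := fun h => hg (by simp [h])
  -- extract the δ-multiplicity of h0
  obtain ⟨k, c, hdc, hch0⟩ := WfDvdMonoid.max_power_factor hh0 hirr
  have hcc : c.coeff 0 ≠ 0 := by
    intro h
    exact hXh0 (hch0 ▸ (Polynomial.X_dvd_iff.mpr h).mul_left _)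
  have hrev : (X ^ m * h0).reverse = h0.reverse := Polynomial.reverse_X_pow_mul h0 m
  -- δ does not divide c.reverse
  have hdcr : ¬ δ ∣ c.reverse := by
    rintro ⟨d, hd⟩
    apply hdc
    have hcd : c = δ.reverse * d.reverse := by
      rw [← rev_rev c hcc, hd, Polynomial.reverse_mul_of_domain]
    rcases hsym with h' | h'
    · exact ⟨d.reverse, by rw [hcd, h']⟩
    · exact ⟨-d.reverse, by rw [hcd, h']; ring⟩
  -- the sign coming from symmetry
  obtain ⟨e, he, heu⟩ : ∃ e : ℤ[X], δ.reverse ^ k = e * δ ^ k ∧ IsUnit e := by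
    rcases hsym with h' | h'
    · exact ⟨1, by rw [h', one_mul], isUnit_one⟩
    · exact ⟨(-1) ^ k, by rw [h', neg_pow], isUnit_one.neg.pow k⟩
  have hrevh0 : h0.reverse = δ.reverse ^ k * c.reverse := by
    rw [hch0, Polynomial.reverse_mul_of_domain, rev_pow]
  have hfact : (X ^ m * h0) * (X ^ m * h0).reverse
      = δ ^ (2 * k) * (e * (X ^ m * (c * c.reverse))) := by
    rw [hrev, hrevh0, hch0, he]; ring
  have hw : ¬ δ ∣ e * (X ^ m * (c * c.reverse)) := by
    intro hd
    rcases hprime.dvd_mul.mp hd with h1 | h1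
    · exact hirr.not_isUnit (isUnit_of_dvd_unit h1 heu)
    rcases hprime.dvd_mul.mp h1 with h1 | h1
    · have hδX : X ∣ δ :=
        ((hirr.associated_of_dvd Polynomial.irreducible_X
          (hprime.dvd_of_dvd_pow h1)).symm).dvd
      exact hδc (Polynomial.X_dvd_iff.mp hδX)
    rcases hprime.dvd_mul.mp h1 with h2 | h2
    · exact hdc h2
    · exact hdcr h2
  refine ⟨2 * k, even_two_mul k, ⟨_, hfact⟩, ?_⟩
  intro hd
  rw [hfact, pow_succ, mul_dvd_mul_iff_left (pow_ne_zero _ hδ0)] at hd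
  exact hw hd
end

section
/- Suppose f, h ∈ ℤ[t] satisfy f(t) · h(t^2) · Φ_{2p}(t) = g(t) · g*(t) for some g ∈ ℤ[t] with g* its reciprocal polynomial, where p is an odd prime, h(1) = ±1, and Φ_{2p} does not divide f. Then Φ_{2p} divides g·g* to odd total multiplicity on the left side, a contradiction; i.e., no such f, h, g exist with Φ_{2p} ∤ f. Equivalently: if f(t) h(t^2) Φ_{2p}(t) = g(t) g*(t) with h(1) = ±1 and p an odd prime, then Φ_{2p} divides f. -/
open Polynomial Finset

lemma sdiff_div (p : ℕ) (hp : p.Prime) (hodd : Odd p) :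
    (2 * p).divisors \ p.divisors = {2, 2 * p} := by
  have hp2 : p ≠ 2 := by rintro rfl; exact (Nat.not_even_iff_odd.mpr hodd) even_two
  have hpos : 0 < p := hp.pos
  ext x
  simp only [Finset.mem_sdiff, Nat.mem_divisors, Finset.mem_insert, Finset.mem_singleton]
  constructor
  · rintro ⟨⟨hdvd, h2p⟩, hnd⟩
    have hxp : ¬ x ∣ p := fun hd => hnd ⟨hd, hpos.ne'⟩
    rcases Nat.even_or_odd x with hex | hox
    · obtain ⟨y, rfl⟩ := hex
      have hyy : y + y = 2 * y := by ring
      rw [hyy] at hdvd hxp ⊢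
      have hy : y ∣ p := (Nat.mul_dvd_mul_iff_left (by norm_num : 0 < 2)).mp hdvd
      rcases (Nat.Prime.eq_one_or_self_of_dvd hp y hy) with rfl | rfl
      · left; rfl
      · right; rfl
    · exfalso
      have hc : Nat.Coprime 2 x := (Nat.Prime.coprime_iff_not_dvd Nat.prime_two).mpr
        (by simpa [Nat.two_dvd_ne_zero, Nat.odd_iff.mp hox] using (Nat.odd_iff.mp hox))
      exact hxp (hc.symm.dvd_of_dvd_mul_left hdvd)
  · rintro (rfl | rfl)
    · exact ⟨⟨⟨p, rfl⟩, by omega⟩, fun hd =>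
        hp2 ((Nat.prime_dvd_prime_iff_eq Nat.prime_two hp).mp hd.1).symm⟩
    · refine ⟨⟨dvd_rfl, by omega⟩, fun hd => ?_⟩
      have := Nat.le_of_dvd hpos hd.1
      omega

lemma cyc2p_sum (p : ℕ) (hp : p.Prime) (hodd : Odd p) :
    cyclotomic (2 * p) ℤ = ∑ i ∈ range p, C ((-1 : ℤ) ^ i) * X ^ i := by
  have hpos : 0 < p := hp.pos
  have hp2 : 2 ≤ p := hp.two_le
  have hmem : p ∈ (2 * p).properDivisors := by
    rw [Nat.mem_properDivisors]
    exact ⟨⟨2, by ring⟩, by omega⟩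
  have hkey := X_pow_sub_one_mul_prod_cyclotomic_eq_X_pow_sub_one_of_dvd ℤ (Nat.mem_properDivisors.mp hmem).1 (by omega)
  rw [sdiff_div p hp hodd] at hkey
  have h2ne : (2 : ℕ) ≠ 2 * p := by omega
  rw [Finset.prod_insert (by simpa using h2ne), Finset.prod_singleton, cyclotomic_two] at hkey
  have hsum : ((X : ℤ[X]) + 1) * ∑ i ∈ range p, C ((-1 : ℤ) ^ i) * X ^ i = X ^ p + 1 := by
    have hg := geom_sum_mul (-(X : ℤ[X])) p
    have hxp : (-(X : ℤ[X])) ^ p = -X ^ p := Odd.neg_pow hodd X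
    have hterm : ∀ i : ℕ, (-(X : ℤ[X])) ^ i = C ((-1 : ℤ) ^ i) * X ^ i := fun i => by
      rw [neg_pow, map_pow, map_neg, map_one]
    rw [hxp] at hg
    simp_rw [hterm] at hg
    linear_combination -hg
  have hXp : ((X : ℤ[X]) ^ p - 1) ≠ 0 := by
    simpa using (monic_X_pow_sub_C (1 : ℤ) (by omega : p ≠ 0)).ne_zero
  have hXp1 : ((X : ℤ[X]) + 1) ≠ 0 := by
    intro hzero
    have := congrArg (Polynomial.eval (2 : ℤ)) hzero
    simp at this
  apply mul_left_cancel₀ hXp1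
  apply mul_left_cancel₀ hXp
  rw [hkey, hsum, mul_comm 2 p, pow_mul]; ring

lemma cyc2p_coeff (p : ℕ) (hp : p.Prime) (hodd : Odd p) (n : ℕ) :
    (cyclotomic (2 * p) ℤ).coeff n = if n < p then (-1 : ℤ) ^ n else 0 := by
  rw [cyc2p_sum p hp hodd, finset_sum_coeff]
  simp_rw [coeff_C_mul, coeff_X_pow]
  simp [Finset.sum_ite_eq' (Finset.range p) n]

lemma cyc2p_eval_neg_one (p : ℕ) (hp : p.Prime) (hodd : Odd p) :
    (cyclotomic (2 * p) ℤ).eval (-1) = p := by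
  rw [cyc2p_sum p hp hodd]
  simp [eval_finset_sum, ← mul_pow]

lemma cyc2p_natDegree (p : ℕ) (hp : p.Prime) (hodd : Odd p) :
    (cyclotomic (2 * p) ℤ).natDegree = p - 1 := by
  have hp2 : p ≠ 2 := by rintro rfl; exact (Nat.not_even_iff_odd.mpr hodd) even_two
  rw [natDegree_cyclotomic, Nat.totient_mul (Nat.coprime_primes Nat.prime_two hp |>.mpr
    (Ne.symm hp2)), Nat.totient_two, Nat.totient_prime hp, one_mul]

lemma cyc2p_reverse (p : ℕ) (hp : p.Prime) (hodd : Odd p) :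
    (cyclotomic (2 * p) ℤ).reverse = cyclotomic (2 * p) ℤ := by
  have hdeg := cyc2p_natDegree p hp hodd
  have hpe : Even (p - 1) := Nat.Odd.sub_odd hodd odd_one
  have hp1 : 1 ≤ p := hp.pos
  ext n
  rw [coeff_reverse, hdeg, cyc2p_coeff p hp hodd, cyc2p_coeff p hp hodd]
  rcases le_or_gt n (p - 1) with hn | hn
  · rw [revAt_le hn, if_pos (by omega), if_pos (by omega)]
    obtain ⟨k, hk⟩ := hpe
    have h2 : p - 1 - n + n = p - 1 := by omega
    have : (-1 : ℤ) ^ (p - 1 - n) * (-1 : ℤ) ^ n = 1 := by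
      rw [← pow_add, h2, hk, ← two_mul]
      simp [pow_mul]
    have hsq : (-1 : ℤ) ^ n * (-1 : ℤ) ^ n = 1 := by
      rw [← pow_add, ← two_mul]; simp [pow_mul]
    calc (-1 : ℤ) ^ (p - 1 - n) = (-1) ^ (p - 1 - n) * ((-1) ^ n * (-1) ^ n) := by rw [hsq, mul_one]
      _ = ((-1) ^ (p - 1 - n) * (-1) ^ n) * (-1) ^ n := by ring
      _ = (-1) ^ n := by rw [this, one_mul]
  · rw [revAt_eq_self_of_lt hn]

lemma cyc2p_mirror (p : ℕ) (hp : p.Prime) (hodd : Odd p) :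
    (cyclotomic (2 * p) ℤ).mirror = cyclotomic (2 * p) ℤ := by
  have hc0 : (cyclotomic (2 * p) ℤ).coeff 0 ≠ 0 := by
    rw [cyc2p_coeff p hp hodd, if_pos hp.pos]; norm_num
  have ht : (cyclotomic (2 * p) ℤ).natTrailingDegree = 0 := by
    rw [natTrailingDegree_eq_zero]; right; exact hc0
  rw [Polynomial.mirror, ht, pow_zero, mul_one, cyc2p_reverse p hp hodd]

lemma mirror_pow_eq (q : ℤ[X]) (k : ℕ) (hq : q.mirror = q) : (q ^ k).mirror = q ^ k := by
  induction k with
  | zero => simpa using (Polynomial.mirror_C (1 : ℤ)).trans (by simp)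
  | succ n ih => rw [pow_succ, Polynomial.mirror_mul_of_domain, ih, hq]

theorem stmt_15 (p : ℕ) (hp : p.Prime) (hodd : Odd p) (f h g : ℤ[X])
    (hh : h.eval 1 = 1 ∨ h.eval 1 = -1)
    (heq : f * h.comp (X ^ 2) * cyclotomic (2 * p) ℤ = g * g.reverse) :
    cyclotomic (2 * p) ℤ ∣ f := by
  by_contra hndvd
  set Φ : ℤ[X] := cyclotomic (2 * p) ℤ with hΦdef
  have hprime : Prime Φ :=
    UniqueFactorizationMonoid.irreducible_iff_prime.mp
      (cyclotomic.irreducible (by have := hp.pos; omega))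
  have hpdvd_aux : ∀ z : ℤ, (z = 1 ∨ z = -1) → ¬ (p : ℤ) ∣ z := by
    rintro z (rfl | rfl) hd
    · have := Int.le_of_dvd one_pos hd
      have := hp.two_le; omega
    · have := Int.le_of_dvd (by norm_num) hd.neg_right
      have := hp.two_le; omega
  have hΦX : ¬ Φ ∣ (X : ℤ[X]) := by
    rintro ⟨c, hc⟩
    have := congrArg (Polynomial.eval (-1 : ℤ)) hc
    rw [eval_X, eval_mul, cyc2p_eval_neg_one p hp hodd] at this
    exact hpdvd_aux (-1) (Or.inr rfl) ⟨c.eval (-1), this⟩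
  have hΦh2 : ¬ Φ ∣ h.comp (X ^ 2) := by
    rintro ⟨c, hc⟩
    have := congrArg (Polynomial.eval (-1 : ℤ)) hc
    rw [eval_comp, eval_pow, eval_X, eval_mul, cyc2p_eval_neg_one p hp hodd] at this
    norm_num at this
    exact hpdvd_aux (h.eval 1) hh ⟨c.eval (-1), this⟩
  -- nonzeroness
  have hf0 : f ≠ 0 := fun h0 => hndvd (h0 ▸ dvd_zero Φ)
  have hh0 : h.comp (X ^ 2) ≠ 0 := fun h0 => hΦh2 (h0 ▸ dvd_zero Φ)
  have hΦ0 : Φ ≠ 0 := hprime.ne_zero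
  have hL0 : f * h.comp (X ^ 2) * Φ ≠ 0 := by
    exact mul_ne_zero (mul_ne_zero hf0 hh0) hΦ0
  have hg0 : g ≠ 0 := by
    intro h0
    rw [h0, zero_mul] at heq
    exact hL0 heq
  have hgr0 : g.reverse ≠ 0 := by rwa [Ne, reverse_eq_zero]
  -- multiplicity transfer to mirror
  have hmirΦ : Φ.mirror = Φ := cyc2p_mirror p hp hodd
  have htrans : ∀ (q : ℤ[X]) (k : ℕ), Φ ^ k ∣ q → Φ ^ k ∣ q.mirror := by
    rintro q k ⟨r, rfl⟩
    rw [Polynomial.mirror_mul_of_domain, mirror_pow_eq Φ k hmirΦ]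
    exact Dvd.intro _ rfl
  have hΦXt : ∀ t : ℕ, ¬ Φ ∣ (X : ℤ[X]) ^ t := fun t hd => by
    rcases t with _ | t
    · exact hprime.not_unit (isUnit_of_dvd_one (by simpa using hd))
    · exact hΦX (hprime.dvd_of_dvd_pow hd)
  have hiff : ∀ k : ℕ, Φ ^ k ∣ g ↔ Φ ^ k ∣ g.reverse := by
    intro k
    constructor
    · intro hd
      have h1 : Φ ^ k ∣ g.mirror := htrans g k hd
      rw [Polynomial.mirror] at h1
      exact hprime.pow_dvd_of_dvd_mul_right k (hΦXt _) h1
    · intro hd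
      have h1 : Φ ^ k ∣ g.mirror := by
        rw [Polynomial.mirror]
        exact hd.mul_right _
      have h2 := htrans g.mirror k h1
      rwa [Polynomial.mirror_mirror] at h2
  have hfing : FiniteMultiplicity Φ g :=
    FiniteMultiplicity.of_not_isUnit hprime.not_isUnit hg0
  have hfingr : FiniteMultiplicity Φ g.reverse :=
    FiniteMultiplicity.of_not_isUnit hprime.not_isUnit hgr0
  have hrev : multiplicity Φ g.reverse = multiplicity Φ g := by
    apply le_antisymm
    · exact hfing.le_multiplicity_of_pow_dvd ((hiff _).mpr (pow_multiplicity_dvd Φ g.reverse))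
    · exact hfingr.le_multiplicity_of_pow_dvd ((hiff _).mp (pow_multiplicity_dvd Φ g))
  -- multiplicity count
  have hfinL : FiniteMultiplicity Φ (f * h.comp (X ^ 2) * Φ) :=
    FiniteMultiplicity.of_not_isUnit hprime.not_isUnit hL0
  have hfinR : FiniteMultiplicity Φ (g * g.reverse) := heq ▸ hfinL
  have hmf : multiplicity Φ f = 0 := multiplicity_eq_zero.mpr hndvd
  have hmh : multiplicity Φ (h.comp (X ^ 2)) = 0 := multiplicity_eq_zero.mpr hΦh2
  have hL : multiplicity Φ (f * h.comp (X ^ 2) * Φ) = 1 := by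
    rw [multiplicity_mul hprime hfinL, multiplicity_mul hprime hfinL.mul_left, hmf, hmh,
      multiplicity_self]
  have hR : multiplicity Φ (g * g.reverse) = 2 * multiplicity Φ g := by
    rw [multiplicity_mul hprime hfinR, hrev]; ring
  rw [heq, hR] at hL
  omega
end
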